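/- Let C be a nonnegative random variable with survival function G, cumulative hazard Λ(s) = ∫_0^s G(u-)^{-1} dF0(u), and let T ∧ t be a (possibly random) time with G((T∧t)-) > 0. Define the counting-process martingale increment M(ds) = d1{C ≤ s} - 1{C ≥ s} dΛ(s), and W* = 1{C ≥ T∧t}/G((T∧t)-). Then, pathwise, W* - 1 = -∫_{[0, T∧t)} (1/G(s)) M(ds), where the integral is over [0, t) restricted by the indicator 1{T > s} (i.e. over s < T ∧ t). -/

import Mathlib

open MeasureTheory Set
open scoped ENNReal


lemma inv_add_eq' (g m : ℝ≥0∞) (hg : g ≠ 0) (hfin : g + m ≠ ⊤) :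
    g⁻¹ = (g + m)⁻¹ + m * (g * (g + m))⁻¹ := by
  have hgt : g ≠ ⊤ := fun h => hfin (by simp [h])
  have hgm : g + m ≠ 0 := by simp [hg]
  have h1 : (g * (g + m))⁻¹ = g⁻¹ * (g + m)⁻¹ := by
    rw [ENNReal.mul_inv (Or.inl hg) (Or.inl hgt)]
  rw [h1, ← mul_assoc]
  have h3 : (g + m)⁻¹ + m * g⁻¹ * (g + m)⁻¹ = (1 + m * g⁻¹) * (g + m)⁻¹ := by ring
  rw [h3]
  have h2 : (1 + m * g⁻¹) = (g + m) * g⁻¹ := by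
    rw [add_mul, ENNReal.mul_inv_cancel hg hgt]
  rw [h2, mul_comm (g + m) g⁻¹, mul_assoc, ENNReal.mul_inv_cancel hgm hfin, mul_one]

lemma hmeas_aux (μ : Measure ℝ) : Measurable (fun s => (μ (Ioi s) * μ (Ici s))⁻¹) := by
  have h1 : Measurable (fun s : ℝ => μ (Ioi s)) :=
    Antitone.measurable (fun x y hxy => measure_mono (Ioi_subset_Ioi hxy))
  have h2 : Measurable (fun s : ℝ => μ (Ici s)) :=
    Antitone.measurable (fun x y hxy => measure_mono (Ici_subset_Ici.2 hxy))
  exact (h1.mul h2).inv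

lemma interval_bounds (μ : Measure ℝ) [IsFiniteMeasure μ] (c a b : ℝ)
    (hab : a ≤ b) (hbc : b ≤ c) (hGc : μ (Ioi c) ≠ 0) :
    (μ (Ioi b))⁻¹ ≤ (μ (Ioi a))⁻¹ + (∫⁻ s in Ioc a b, (μ (Ioi s) * μ (Ici s))⁻¹ ∂μ) +
        μ (Ioo a b) * ((μ (Ici b))⁻¹ * (μ (Ici b))⁻¹ - (μ (Ioi a))⁻¹ * (μ (Ioi a))⁻¹) ∧
      (μ (Ioi a))⁻¹ + (∫⁻ s in Ioc a b, (μ (Ioi s) * μ (Ici s))⁻¹ ∂μ) ≤ (μ (Ioi b))⁻¹ +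
        μ (Ioo a b) * ((μ (Ici b))⁻¹ * (μ (Ici b))⁻¹ - (μ (Ioi a))⁻¹ * (μ (Ioi a))⁻¹) := by
  rcases eq_or_lt_of_le hab with rfl | hab
  · simp
  set g := μ (Ioi b) with hgdef
  set p := μ (Ici b) with hpdef
  set q := μ (Ioi a) with hqdef
  set x := μ (Ioo a b) with hxdef
  set j := μ {b} with hjdef
  have hg : g ≠ 0 := fun h => hGc (measure_mono_null (Ioi_subset_Ioi hbc) h)
  have hgp : g ≤ p := measure_mono Ioi_subset_Ici_self
  have hpq : p ≤ q := measure_mono (Ici_subset_Ioi.2 hab)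
  have hp : p ≠ 0 := fun h => hg (le_antisymm (h ▸ hgp) zero_le)
  have hq : q ≠ 0 := fun h => hp (le_antisymm (h ▸ hpq) zero_le)
  have hpt : p ≠ ⊤ := measure_ne_top μ _
  have hqt : q ≠ ⊤ := measure_ne_top μ _
  have hxt : x ≠ ⊤ := measure_ne_top μ _
  -- decompositions
  have hqpx : q = p + x := by
    rw [hqdef, hpdef, hxdef, ← Ioo_union_Ici_eq_Ioi hab,
      measure_union _ measurableSet_Ici, add_comm]
    exact disjoint_left.2 fun s hs hs' => absurd hs' (not_le.2 hs.2)
  have hpgj : p = g + j := by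
    rw [hpdef, hgdef, hjdef, ← Ioi_union_left, measure_union _ (measurableSet_singleton b)]
    exact disjoint_left.2 (by rintro s hs hs'; simp only [mem_singleton_iff] at hs'; subst hs'; exact lt_irrefl _ (mem_Ioi.1 hs))
  -- integral split
  have hIsplit : (∫⁻ s in Ioc a b, (μ (Ioi s) * μ (Ici s))⁻¹ ∂μ) =
      (∫⁻ s in Ioo a b, (μ (Ioi s) * μ (Ici s))⁻¹ ∂μ) + j * (g * p)⁻¹ := by
    rw [← Ioo_union_right hab, lintegral_union (measurableSet_singleton b)
      (disjoint_left.2 (by rintro s hs hs'; simp only [mem_singleton_iff] at hs'; subst hs'; exact lt_irrefl _ (mem_Ioo.1 hs).2)),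
      lintegral_singleton, hgdef, hpdef, hjdef, mul_comm]
  have hjump : g⁻¹ = p⁻¹ + j * (g * p)⁻¹ := by
    have h := inv_add_eq' g j hg (hpgj ▸ hpt)
    rwa [← hpgj] at h
  have hpsplit : p⁻¹ = q⁻¹ + x * (p * q)⁻¹ := by
    have h := inv_add_eq' p x hp (hqpx ▸ hqt)
    rwa [← hqpx] at h
  set I := ∫⁻ s in Ioo a b, (μ (Ioi s) * μ (Ici s))⁻¹ ∂μ with hIdef
  have hqpinv : q⁻¹ ≤ p⁻¹ := ENNReal.inv_le_inv.2 hpq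
  have hIup : I ≤ x * (p⁻¹ * p⁻¹) := by
    have hb : ∀ s ∈ Ioo a b, (μ (Ioi s) * μ (Ici s))⁻¹ ≤ p⁻¹ * p⁻¹ := by
      intro s hs
      rw [← ENNReal.mul_inv (Or.inl hp) (Or.inl hpt)]
      apply ENNReal.inv_le_inv.2
      exact mul_le_mul' (measure_mono (Ici_subset_Ioi.2 hs.2))
        (measure_mono (Ici_subset_Ici.2 hs.2.le))
    calc I ≤ ∫⁻ _ in Ioo a b, p⁻¹ * p⁻¹ ∂μ := setLIntegral_mono measurable_const hb
      _ = x * (p⁻¹ * p⁻¹) := by rw [setLIntegral_const, mul_comm]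
  have hIlo : x * (q⁻¹ * q⁻¹) ≤ I := by
    have hb : ∀ s ∈ Ioo a b, q⁻¹ * q⁻¹ ≤ (μ (Ioi s) * μ (Ici s))⁻¹ := by
      intro s hs
      rw [← ENNReal.mul_inv (Or.inl hq) (Or.inl hqt)]
      apply ENNReal.inv_le_inv.2
      exact mul_le_mul' (measure_mono (Ioi_subset_Ioi hs.1.le))
        (measure_mono (Ici_subset_Ioi.2 hs.1))
    calc x * (q⁻¹ * q⁻¹) = ∫⁻ _ in Ioo a b, q⁻¹ * q⁻¹ ∂μ := by
          rw [setLIntegral_const, mul_comm]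
      _ ≤ I := setLIntegral_mono (hmeas_aux μ) hb
  have hmidU : (p * q)⁻¹ ≤ p⁻¹ * p⁻¹ := by
    rw [ENNReal.mul_inv (Or.inl hp) (Or.inl hpt)]
    exact mul_le_mul_right hqpinv _
  have hmidL : q⁻¹ * q⁻¹ ≤ (p * q)⁻¹ := by
    rw [ENNReal.mul_inv (Or.inl hp) (Or.inl hpt)]
    exact mul_le_mul_left hqpinv _
  set D := x * (p⁻¹ * p⁻¹ - q⁻¹ * q⁻¹) with hDdef
  have hupper_eq : x * (p⁻¹ * p⁻¹) = x * (q⁻¹ * q⁻¹) + D := by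
    rw [hDdef, ← mul_add, add_tsub_cancel_of_le (mul_le_mul' hqpinv hqpinv)]
  constructor
  · rw [hIsplit, hjump, hpsplit]
    calc q⁻¹ + x * (p * q)⁻¹ + j * (g * p)⁻¹
        ≤ q⁻¹ + x * (p⁻¹ * p⁻¹) + j * (g * p)⁻¹ :=
          add_le_add_left (add_le_add_right (mul_le_mul_right hmidU x) _) _
      _ = q⁻¹ + (x * (q⁻¹ * q⁻¹) + D) + j * (g * p)⁻¹ := by rw [hupper_eq]
      _ ≤ q⁻¹ + (I + D) + j * (g * p)⁻¹ :=
          add_le_add_left (add_le_add_right (add_le_add_left hIlo D) _) _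
      _ = q⁻¹ + (I + j * (g * p)⁻¹) + D := by ring
  · rw [hIsplit, hjump, hpsplit]
    calc q⁻¹ + (I + j * (g * p)⁻¹)
        ≤ q⁻¹ + (x * (p⁻¹ * p⁻¹) + j * (g * p)⁻¹) :=
          add_le_add_right (add_le_add_left hIup _) _
      _ = q⁻¹ + x * (q⁻¹ * q⁻¹) + j * (g * p)⁻¹ + D := by rw [hupper_eq]; ring
      _ ≤ q⁻¹ + x * (p * q)⁻¹ + j * (g * p)⁻¹ + D :=
          add_le_add_left (add_le_add_left (add_le_add_right (mul_le_mul_right hmidL x) _) _) _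



lemma tele_sum' (u v : ℕ → ℝ≥0∞) (n : ℕ)
    (h1 : ∀ i, i < n → u i ≤ u (i + 1)) (h2 : ∀ i, i < n → v i ≤ u (i + 1)) :
    ∑ i ∈ Finset.range n, (v i - u i) ≤ u n - u 0 := by
  induction n with
  | zero => simp
  | succ n ih =>
    rw [Finset.sum_range_succ]
    have hun : u 0 ≤ u n := by
      clear ih
      induction n with
      | zero => exact le_refl _
      | succ k ihk =>
        exact le_trans (ihk (fun i hi => h1 i (by omega)) (fun i hi => h2 i (by omega)))
          (h1 k (by omega))
    calc ∑ i ∈ Finset.range n, (v i - u i) + (v n - u n)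
        ≤ (u n - u 0) + (v n - u n) :=
          add_le_add_left (ih (fun i hi => h1 i (by omega)) (fun i hi => h2 i (by omega))) _
      _ = (v n - u n) + (u n - u 0) := add_comm _ _
      _ ≤ (u (n+1) - u n) + (u n - u 0) :=
          add_le_add_left (tsub_le_tsub_right (h2 n (by omega)) _) _
      _ = u (n+1) - u 0 := tsub_add_tsub_cancel (h1 n (by omega)) hun

lemma core_bounds (μ : Measure ℝ) [IsProbabilityMeasure μ] (hnonneg : μ (Iio 0) = 0)
    (c : ℝ) (hc : 0 ≤ c) (hGc : μ (Ioi c) ≠ 0) (n : ℕ) (hn : 0 < n) :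
    ((μ (Ioi c))⁻¹ ≤ (μ (Ici 0))⁻¹ + (∫⁻ s in Icc 0 c, (μ (Ioi s) * μ (Ici s))⁻¹ ∂μ)
        + ((n : ℝ≥0∞))⁻¹ * ((μ (Ioi c))⁻¹ * (μ (Ioi c))⁻¹)) ∧
      ((μ (Ici 0))⁻¹ + (∫⁻ s in Icc 0 c, (μ (Ioi s) * μ (Ici s))⁻¹ ∂μ) ≤
        (μ (Ioi c))⁻¹ + ((n : ℝ≥0∞))⁻¹ * ((μ (Ioi c))⁻¹ * (μ (Ioi c))⁻¹)) := by
  classical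
  have hnne : (n : ℝ≥0∞) ≠ 0 := by exact_mod_cast Nat.pos_iff_ne_zero.1 hn
  have hnt : (n : ℝ≥0∞) ≠ ⊤ := ENNReal.natCast_ne_top n
  set S : ℕ → Set ℝ := fun i => {x | (i : ℝ≥0∞) / n ≤ μ (Iic x)} ∪ {c} with hSdef
  have hne : ∀ i, (S i).Nonempty := fun i => ⟨c, mem_union_right _ rfl⟩
  have hS0 : ∀ i : ℕ, 1 ≤ i → ∀ x ∈ S i, (0 : ℝ) ≤ x := by
    intro i hi x hx
    rcases hx with hx | hx
    · by_contra hneg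
      push_neg at hneg
      have h1 : μ (Iic x) ≤ μ (Iio 0) := measure_mono (fun y hy => lt_of_le_of_lt hy hneg)
      rw [hnonneg, le_zero_iff] at h1
      have h2 : (i : ℝ≥0∞) / n = 0 := le_antisymm (h1 ▸ hx) zero_le
      rw [ENNReal.div_eq_zero_iff] at h2
      rcases h2 with h2 | h2
      · exact (Nat.cast_ne_zero.2 (by omega)) h2
      · exact hnt h2
    · simp only [mem_singleton_iff] at hx; exact hx ▸ hc
  have hbdd : ∀ i : ℕ, 1 ≤ i → BddBelow (S i) := fun i hi => ⟨0, fun x hx => hS0 i hi x hx⟩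
  set t : ℕ → ℝ := fun i => if i = 0 then 0 else sInf (S i) with htdef
  have ht0 : t 0 = 0 := by simp [htdef]
  have h0le : ∀ i, 0 ≤ t i := by
    intro i
    cases i with
    | zero => simp [htdef]
    | succ i =>
      have : t (i+1) = sInf (S (i+1)) := by simp [htdef]
      rw [this]
      exact le_csInf (hne _) (fun x hx => hS0 (i+1) (by omega) x hx)
  have hlec : ∀ i, t i ≤ c := by
    intro i
    cases i with
    | zero => simpa [htdef] using hc
    | succ i =>
      have : t (i+1) = sInf (S (i+1)) := by simp [htdef]
      rw [this]
      exact csInf_le (hbdd _ (by omega)) (mem_union_right _ rfl)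
  have hmono : ∀ i, t i ≤ t (i + 1) := by
    intro i
    cases i with
    | zero => rw [ht0]; exact h0le 1
    | succ i =>
      have e1 : t (i+1) = sInf (S (i+1)) := by simp [htdef]
      have e2 : t (i+2) = sInf (S (i+2)) := by simp [htdef]
      rw [e1, e2]
      apply csInf_le_csInf (hbdd _ (by omega)) (hne _)
      intro x hx
      rcases hx with hx | hx
      · left
        refine le_trans (ENNReal.div_le_div_right ?_ _) hx
        exact Nat.cast_le.mpr (by omega)
      · exact mem_union_right _ hx
  have htn : t n = c := by
    have e1 : t n = sInf (S n) := by
      simp only [htdef]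
      rw [if_neg (by omega)]
    rw [e1]
    refine le_antisymm (e1 ▸ hlec n) (le_csInf (hne n) ?_)
    intro y hy
    rcases hy with hy | hy
    · by_contra hlt
      push_neg at hlt
      have h1 : (1 : ℝ≥0∞) ≤ μ (Iic y) := by
        have := hy
        rwa [ENNReal.div_self hnne hnt] at this
      have h2 : μ (Ioi y) = 0 := by
        have hcompl : μ (Ioi y) = 1 - μ (Iic y) := by
          rw [← compl_Iic, measure_compl measurableSet_Iic (measure_ne_top μ _), measure_univ]
        rw [hcompl, tsub_eq_zero_of_le h1]
      exact hGc (measure_mono_null (Ioi_subset_Ioi hlt.le) h2)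
    · simp only [mem_singleton_iff] at hy; exact hy ▸ le_refl c
  -- mass of open intervals is at most 1/n
  have key : ∀ i : ℕ, μ (Ioo (t i) (t (i + 1))) ≤ ((n : ℝ≥0∞))⁻¹ := by
    intro i
    rcases eq_or_lt_of_le (hmono i) with heq | hab
    · rw [← heq]; simp
    have hbval : t (i + 1) = sInf (S (i + 1)) := by simp [htdef]
    have hupper : μ (Iio (t (i + 1))) ≤ ((i + 1 : ℕ) : ℝ≥0∞) / n := by
      have hun : Iio (t (i + 1)) = ⋃ k : ℕ, Iic (t (i + 1) - 1 / (k + 1)) := by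
        ext x
        simp only [mem_Iio, mem_iUnion, mem_Iic]
        constructor
        · intro hx
          obtain ⟨k, hk⟩ := exists_nat_one_div_lt (sub_pos.2 hx)
          exact ⟨k, by push_cast at hk ⊢; linarith⟩
        · rintro ⟨k, hk⟩
          have hpos : (0 : ℝ) < 1 / ((k : ℝ) + 1) := by positivity
          linarith
      rw [hun, Monotone.measure_iUnion]
      · apply iSup_le
        intro k
        have hxlt : t (i + 1) - 1 / ((k : ℝ) + 1) < sInf (S (i + 1)) := by
          rw [← hbval]
          have hpos : (0 : ℝ) < 1 / ((k : ℝ) + 1) := by positivity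
          linarith
        have hnotin := notMem_of_lt_csInf hxlt (hbdd _ (by omega))
        have hnotle : ¬ (((i + 1 : ℕ) : ℝ≥0∞) / n ≤ μ (Iic (t (i + 1) - 1 / ((k : ℝ) + 1)))) :=
          fun hcon => hnotin (mem_union_left _ hcon)
        exact (not_le.1 hnotle).le
      · intro j k hjk
        apply Iic_subset_Iic.2
        have hle : (1 : ℝ) / ((k : ℝ) + 1) ≤ 1 / ((j : ℝ) + 1) := by
          apply one_div_le_one_div_of_le
          · positivity
          · have : (j : ℝ) ≤ (k : ℝ) := Nat.cast_le.2 hjk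
            linarith
        linarith
    have hlower : ((i : ℕ) : ℝ≥0∞) / n ≤ μ (Iic (t i)) := by
      cases i with
      | zero => simp
      | succ i =>
        have haval : t (i + 1) = sInf (S (i + 1)) := by simp [htdef]
        have hac : t (i + 1) < c := lt_of_lt_of_le hab (hlec (i + 2))
        have hcip : (0 : ℝ) < c - t (i+1) := sub_pos.2 hac
        have hiic : Iic (t (i + 1)) = ⋂ k : ℕ, Iic (t (i + 1) + (c - t (i + 1)) / (k + 2)) := by
          ext x
          simp only [mem_Iic, mem_iInter]
          constructor
          · intro hx k
            have h1 : (0 : ℝ) < (c - t (i + 1)) / ((k : ℝ) + 2) := by positivity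
            linarith
          · intro hx
            by_contra hgt
            push_neg at hgt
            obtain ⟨k, hk⟩ := exists_nat_one_div_lt
              (div_pos (sub_pos.2 hgt) hcip : (0:ℝ) < (x - t (i+1)) / (c - t (i+1)))
            have h3 : 1 / ((k:ℝ)+1) * (c - t (i+1)) < x - t (i+1) := (lt_div_iff₀ hcip).1 hk
            have h2 : (c - t (i+1)) / ((k : ℝ) + 2) < x - t (i+1) := by
              have h4 : (c - t (i+1)) / ((k : ℝ) + 2) ≤ 1 / ((k:ℝ)+1) * (c - t (i+1)) := by
                rw [one_div, inv_mul_eq_div]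
                gcongr
                norm_num
              linarith
            exact absurd (hx k) (by linarith)
        rw [hiic]
        have hmeasint : μ (⋂ k : ℕ, Iic (t (i + 1) + (c - t (i + 1)) / (k + 2)))
            = ⨅ k : ℕ, μ (Iic (t (i + 1) + (c - t (i + 1)) / (k + 2))) := by
          apply Antitone.measure_iInter
          · intro j k hjk
            apply Iic_subset_Iic.2
            have h4 : (c - t (i+1)) / ((k : ℝ) + 2) ≤ (c - t (i+1)) / ((j : ℝ) + 2) := by
              apply div_le_div_of_nonneg_left hcip.le (by positivity)
              have : (j : ℝ) ≤ (k : ℝ) := Nat.cast_le.2 hjk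
              linarith
            linarith
          · exact fun k => measurableSet_Iic.nullMeasurableSet
          · exact ⟨0, measure_ne_top μ _⟩
        rw [hmeasint]
        apply le_iInf
        intro k
        have hdelta : (0 : ℝ) < (c - t (i+1)) / ((k : ℝ) + 2) := by positivity
        have hdeltalt : t (i+1) + (c - t (i+1)) / ((k : ℝ) + 2) < c := by
          have h5 : (c - t (i+1)) / ((k : ℝ) + 2) < c - t (i+1) := by
            apply div_lt_self hcip (by linarith)
          linarith
        have hsinf : sInf (S (i+1)) < t (i+1) + (c - t (i+1)) / ((k : ℝ) + 2) := by
          rw [← haval]; linarith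
        obtain ⟨y, hyS, hylt⟩ := exists_lt_of_csInf_lt (hne _) hsinf
        rcases hyS with hyS | hyS
        · calc ((i + 1 : ℕ) : ℝ≥0∞) / n ≤ μ (Iic y) := hyS
            _ ≤ μ (Iic (t (i + 1) + (c - t (i + 1)) / (k + 2))) :=
              measure_mono (Iic_subset_Iic.2 hylt.le)
        · simp only [mem_singleton_iff] at hyS
          subst hyS
          exact absurd hylt (not_lt.2 hdeltalt.le)
    have hsum : μ (Iic (t i)) + μ (Ioo (t i) (t (i+1))) = μ (Iio (t (i+1))) := by
      rw [← Iic_union_Ioo_eq_Iio hab, measure_union _ measurableSet_Ioo]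
      exact disjoint_left.2 (by rintro s hs hs'; exact absurd hs'.1 (not_lt.2 hs))
    have hchain : ((i : ℕ) : ℝ≥0∞) / n + μ (Ioo (t i) (t (i+1)))
        ≤ ((i : ℕ) : ℝ≥0∞) / n + (n : ℝ≥0∞)⁻¹ := by
      calc ((i : ℕ) : ℝ≥0∞) / n + μ (Ioo (t i) (t (i+1)))
          ≤ μ (Iic (t i)) + μ (Ioo (t i) (t (i+1))) := add_le_add_left hlower _
        _ = μ (Iio (t (i+1))) := hsum
        _ ≤ ((i + 1 : ℕ) : ℝ≥0∞) / n := hupper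
        _ = ((i : ℕ) : ℝ≥0∞) / n + (n : ℝ≥0∞)⁻¹ := by
            have hcast : ((i + 1 : ℕ) : ℝ≥0∞) = (i : ℕ) + 1 := by push_cast; ring
            rw [hcast, ← ENNReal.div_add_div_same, one_div]
    have hfin : ((i : ℕ) : ℝ≥0∞) / n ≠ ⊤ :=
      (ENNReal.div_lt_top (ENNReal.natCast_ne_top i) hnne).ne
    exact (ENNReal.add_le_add_iff_left hfin).1 hchain
  -- base case of the induction
  have hG0 : μ (Ioi 0) ≠ 0 := fun h0 => hGc (measure_mono_null (Ioi_subset_Ioi hc) h0)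
  have hsplit0 : μ (Ici 0) = μ (Ioi 0) + μ {0} := by
    rw [← Ioi_union_left, measure_union _ (measurableSet_singleton 0)]
    refine disjoint_left.2 ?_
    rintro s hs hs'
    simp only [mem_singleton_iff] at hs'
    subst hs'
    exact lt_irrefl _ (mem_Ioi.1 hs)
  have base : (μ (Ici 0))⁻¹ + (∫⁻ s in Icc 0 0, (μ (Ioi s) * μ (Ici s))⁻¹ ∂μ)
      = (μ (Ioi 0))⁻¹ := by
    have e1 : (μ (Ioi 0))⁻¹ = (μ (Ici 0))⁻¹ + μ {0} * (μ (Ioi 0) * μ (Ici 0))⁻¹ := by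
      have h2 := inv_add_eq' (μ (Ioi 0)) (μ {0}) hG0 (by rw [← hsplit0]; exact measure_ne_top μ _)
      rwa [← hsplit0] at h2
    rw [Icc_self, lintegral_singleton, e1, mul_comm]
  -- the inductive bound
  set E : ℕ → ℝ≥0∞ := fun i => ∑ j ∈ Finset.range i,
      μ (Ioo (t j) (t (j+1))) * ((μ (Ici (t (j+1))))⁻¹ * (μ (Ici (t (j+1))))⁻¹
        - (μ (Ioi (t j)))⁻¹ * (μ (Ioi (t j)))⁻¹) with hEdef
  have main : ∀ i, i ≤ n →
      ((μ (Ioi (t i)))⁻¹ ≤ (μ (Ici 0))⁻¹ + (∫⁻ s in Icc 0 (t i), (μ (Ioi s) * μ (Ici s))⁻¹ ∂μ) + E i ∧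
       (μ (Ici 0))⁻¹ + (∫⁻ s in Icc 0 (t i), (μ (Ioi s) * μ (Ici s))⁻¹ ∂μ) ≤ (μ (Ioi (t i)))⁻¹ + E i) := by
    intro i
    induction i with
    | zero =>
      intro _
      rw [ht0]
      simp only [hEdef, Finset.range_zero, Finset.sum_empty, add_zero]
      exact ⟨base.ge, base.le⟩
    | succ i ih =>
      intro hin
      obtain ⟨ihL, ihU⟩ := ih (by omega)
      obtain ⟨bL, bU⟩ := interval_bounds μ c (t i) (t (i+1)) (hmono i) (hlec (i+1)) hGc
      have hsplitI : (∫⁻ s in Icc 0 (t (i+1)), (μ (Ioi s) * μ (Ici s))⁻¹ ∂μ)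
          = (∫⁻ s in Icc 0 (t i), (μ (Ioi s) * μ (Ici s))⁻¹ ∂μ)
            + (∫⁻ s in Ioc (t i) (t (i+1)), (μ (Ioi s) * μ (Ici s))⁻¹ ∂μ) := by
        rw [← Icc_union_Ioc_eq_Icc (h0le i) (hmono i), lintegral_union measurableSet_Ioc
          (disjoint_left.2 (by rintro s hs hs'; exact absurd hs'.1 (not_lt.2 hs.2)))]
      have hEsucc : E (i+1) = E i + μ (Ioo (t i) (t (i+1)))
          * ((μ (Ici (t (i+1))))⁻¹ * (μ (Ici (t (i+1))))⁻¹
            - (μ (Ioi (t i)))⁻¹ * (μ (Ioi (t i)))⁻¹) := Finset.sum_range_succ _ _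
      constructor
      · calc (μ (Ioi (t (i+1))))⁻¹
            ≤ (μ (Ioi (t i)))⁻¹ + (∫⁻ s in Ioc (t i) (t (i+1)), (μ (Ioi s) * μ (Ici s))⁻¹ ∂μ)
              + μ (Ioo (t i) (t (i+1))) * ((μ (Ici (t (i+1))))⁻¹ * (μ (Ici (t (i+1))))⁻¹
                - (μ (Ioi (t i)))⁻¹ * (μ (Ioi (t i)))⁻¹) := bL
          _ ≤ ((μ (Ici 0))⁻¹ + (∫⁻ s in Icc 0 (t i), (μ (Ioi s) * μ (Ici s))⁻¹ ∂μ) + E i)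
              + (∫⁻ s in Ioc (t i) (t (i+1)), (μ (Ioi s) * μ (Ici s))⁻¹ ∂μ)
              + μ (Ioo (t i) (t (i+1))) * ((μ (Ici (t (i+1))))⁻¹ * (μ (Ici (t (i+1))))⁻¹
                - (μ (Ioi (t i)))⁻¹ * (μ (Ioi (t i)))⁻¹) :=
            add_le_add_left (add_le_add_left ihL _) _
          _ = (μ (Ici 0))⁻¹ + ((∫⁻ s in Icc 0 (t i), (μ (Ioi s) * μ (Ici s))⁻¹ ∂μ)
              + (∫⁻ s in Ioc (t i) (t (i+1)), (μ (Ioi s) * μ (Ici s))⁻¹ ∂μ))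
              + (E i + μ (Ioo (t i) (t (i+1))) * ((μ (Ici (t (i+1))))⁻¹ * (μ (Ici (t (i+1))))⁻¹
                - (μ (Ioi (t i)))⁻¹ * (μ (Ioi (t i)))⁻¹)) := by ring
          _ = (μ (Ici 0))⁻¹ + (∫⁻ s in Icc 0 (t (i+1)), (μ (Ioi s) * μ (Ici s))⁻¹ ∂μ) + E (i+1) := by
              rw [← hsplitI, ← hEsucc]
      · calc (μ (Ici 0))⁻¹ + (∫⁻ s in Icc 0 (t (i+1)), (μ (Ioi s) * μ (Ici s))⁻¹ ∂μ)
            = ((μ (Ici 0))⁻¹ + (∫⁻ s in Icc 0 (t i), (μ (Ioi s) * μ (Ici s))⁻¹ ∂μ))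
              + (∫⁻ s in Ioc (t i) (t (i+1)), (μ (Ioi s) * μ (Ici s))⁻¹ ∂μ) := by
              rw [hsplitI]; ring
          _ ≤ ((μ (Ioi (t i)))⁻¹ + E i)
              + (∫⁻ s in Ioc (t i) (t (i+1)), (μ (Ioi s) * μ (Ici s))⁻¹ ∂μ) :=
            add_le_add_left ihU _
          _ = ((μ (Ioi (t i)))⁻¹ + (∫⁻ s in Ioc (t i) (t (i+1)), (μ (Ioi s) * μ (Ici s))⁻¹ ∂μ))
              + E i := by ring
          _ ≤ ((μ (Ioi (t (i+1))))⁻¹ + μ (Ioo (t i) (t (i+1)))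
              * ((μ (Ici (t (i+1))))⁻¹ * (μ (Ici (t (i+1))))⁻¹
                - (μ (Ioi (t i)))⁻¹ * (μ (Ioi (t i)))⁻¹)) + E i :=
            add_le_add_left bU _
          _ = (μ (Ioi (t (i+1))))⁻¹ + E (i+1) := by
              rw [hEsucc]; ring
  obtain ⟨mL, mU⟩ := main n le_rfl
  rw [htn] at mL mU
  have hEn : E n ≤ (n : ℝ≥0∞)⁻¹ * ((μ (Ioi c))⁻¹ * (μ (Ioi c))⁻¹) := by
    rw [hEdef]
    have step1 : ∑ j ∈ Finset.range n, μ (Ioo (t j) (t (j+1)))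
        * ((μ (Ici (t (j+1))))⁻¹ * (μ (Ici (t (j+1))))⁻¹
          - (μ (Ioi (t j)))⁻¹ * (μ (Ioi (t j)))⁻¹)
        ≤ ∑ j ∈ Finset.range n, (n : ℝ≥0∞)⁻¹
          * ((μ (Ici (t (j+1))))⁻¹ * (μ (Ici (t (j+1))))⁻¹
            - (μ (Ioi (t j)))⁻¹ * (μ (Ioi (t j)))⁻¹) :=
      Finset.sum_le_sum (fun j _ => mul_le_mul_left (key j) _)
    refine le_trans step1 ?_
    rw [← Finset.mul_sum]
    apply mul_le_mul_right
    have htele := tele_sum' (fun j => (μ (Ioi (t j)))⁻¹ * (μ (Ioi (t j)))⁻¹)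
      (fun j => (μ (Ici (t (j+1))))⁻¹ * (μ (Ici (t (j+1))))⁻¹) n
      (fun i _ => by
        have h5 : μ (Ioi (t (i+1))) ≤ μ (Ioi (t i)) := measure_mono (Ioi_subset_Ioi (hmono i))
        exact mul_le_mul' (ENNReal.inv_le_inv.2 h5) (ENNReal.inv_le_inv.2 h5))
      (fun i _ => by
        have h5 : μ (Ioi (t (i+1))) ≤ μ (Ici (t (i+1))) := measure_mono Ioi_subset_Ici_self
        exact mul_le_mul' (ENNReal.inv_le_inv.2 h5) (ENNReal.inv_le_inv.2 h5))
    refine le_trans htele ?_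
    simp only [htn]
    exact tsub_le_self
  exact ⟨le_trans mL (add_le_add_right hEn _), le_trans mU (add_le_add_right hEn _)⟩

lemma core_eq (μ : Measure ℝ) [IsProbabilityMeasure μ] (hnonneg : μ (Iio 0) = 0)
    (c : ℝ) (hc : 0 ≤ c) (hGc : μ (Ioi c) ≠ 0) :
    (μ (Ici 0))⁻¹ + (∫⁻ s in Icc 0 c, (μ (Ioi s) * μ (Ici s))⁻¹ ∂μ) = (μ (Ioi c))⁻¹ := by
  set K := (μ (Ioi c))⁻¹ * (μ (Ioi c))⁻¹ with hK
  have hKt : K ≠ ⊤ := ENNReal.mul_ne_top (ENNReal.inv_ne_top.2 hGc) (ENNReal.inv_ne_top.2 hGc)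
  have hsmall : ∀ ε : ℝ≥0∞, ε ≠ 0 → ∃ n : ℕ, 0 < n ∧ (n : ℝ≥0∞)⁻¹ * K ≤ ε := by
    intro ε hε
    rcases eq_or_ne K 0 with hK0 | hK0
    · exact ⟨1, one_pos, by simp [hK0]⟩
    · have hdiv : ε / K ≠ 0 := by
        simp only [ne_eq, ENNReal.div_eq_zero_iff, not_or]
        exact ⟨hε, hKt⟩
      obtain ⟨n, hn⟩ := ENNReal.exists_inv_nat_lt hdiv
      refine ⟨n + 1, Nat.succ_pos n, ?_⟩
      have h1 : ((n + 1 : ℕ) : ℝ≥0∞)⁻¹ ≤ ((n : ℕ) : ℝ≥0∞)⁻¹ := by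
        apply ENNReal.inv_le_inv.2
        exact_mod_cast Nat.le_succ n
      calc ((n + 1 : ℕ) : ℝ≥0∞)⁻¹ * K ≤ ((n : ℕ) : ℝ≥0∞)⁻¹ * K := mul_le_mul_left h1 _
        _ ≤ (ε / K) * K := mul_le_mul_left hn.le _
        _ = ε := ENNReal.div_mul_cancel hK0 hKt
  apply le_antisymm
  · apply ENNReal.le_of_forall_pos_le_add
    intro ε hε _
    obtain ⟨n, hn, hb⟩ := hsmall ε (by exact_mod_cast hε.ne')
    exact le_trans (core_bounds μ hnonneg c hc hGc n hn).2 (add_le_add_right hb _)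
  · apply ENNReal.le_of_forall_pos_le_add
    intro ε hε _
    obtain ⟨n, hn, hb⟩ := hsmall ε (by exact_mod_cast hε.ne')
    exact le_trans (core_bounds μ hnonneg c hc hGc n hn).1 (add_le_add_right hb _)

lemma core_Ico (μ : Measure ℝ) [IsProbabilityMeasure μ] (hnonneg : μ (Iio 0) = 0)
    (b : ℝ) (hb : 0 < b) (hGb : μ (Ici b) ≠ 0) :
    (μ (Ici 0))⁻¹ + (∫⁻ s in Ico 0 b, (μ (Ioi s) * μ (Ici s))⁻¹ ∂μ) = (μ (Ici b))⁻¹ := by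
  set ν := μ.withDensity (fun s => (μ (Ioi s) * μ (Ici s))⁻¹) with hν
  have hint : ∀ A : Set ℝ, MeasurableSet A →
      (∫⁻ s in A, (μ (Ioi s) * μ (Ici s))⁻¹ ∂μ) = ν A :=
    fun A hA => (withDensity_apply _ hA).symm
  set cseq : ℕ → ℝ := fun k => b - b / (k + 1) with hcseq
  have hck : ∀ k : ℕ, (0:ℝ) < b / ((k : ℝ) + 1) := by
    intro k; positivity
  have hc0 : ∀ k : ℕ, 0 ≤ cseq k := by
    intro k
    have : b / ((k : ℝ) + 1) ≤ b := by
      apply div_le_self hb.le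
      have : (0:ℝ) ≤ (k : ℝ) := Nat.cast_nonneg k
      linarith
    simp only [hcseq]
    linarith
  have hclt : ∀ k : ℕ, cseq k < b := fun k => sub_lt_self b (hck k)
  have hcmono : Monotone cseq := by
    intro j k hjk
    simp only [hcseq]
    have h1 : b / ((k : ℝ) + 1) ≤ b / ((j : ℝ) + 1) := by
      apply div_le_div_of_nonneg_left hb.le
      · positivity
      · have : (j : ℝ) ≤ (k : ℝ) := Nat.cast_le.2 hjk
        linarith
    linarith
  have hcex : ∀ x : ℝ, x < b → ∃ k : ℕ, x ≤ cseq k := by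
    intro x hx
    rcases le_or_gt x 0 with hx0 | hx0
    · exact ⟨0, le_trans hx0 (hc0 0)⟩
    obtain ⟨k, hk⟩ := exists_nat_one_div_lt (div_pos (sub_pos.2 hx) hb : (0:ℝ) < (b - x) / b)
    refine ⟨k, ?_⟩
    have h2 : b * (1 / ((k:ℝ) + 1)) < b * ((b - x) / b) := mul_lt_mul_of_pos_left hk hb
    rw [mul_one_div, mul_div_cancel₀ _ (ne_of_gt hb)] at h2
    simp only [hcseq]
    linarith
  have hun : (⋃ k, Icc (0:ℝ) (cseq k)) = Ico 0 b := by
    ext x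
    simp only [mem_iUnion, mem_Icc, mem_Ico]
    constructor
    · rintro ⟨k, hk1, hk2⟩
      exact ⟨hk1, lt_of_le_of_lt hk2 (hclt k)⟩
    · rintro ⟨hx1, hx2⟩
      obtain ⟨k, hk⟩ := hcex x hx2
      exact ⟨k, hx1, hk⟩
  have hinter : (⋂ k, Ioi (cseq k)) = Ici b := by
    ext x
    simp only [mem_iInter, mem_Ioi, mem_Ici]
    constructor
    · intro hx
      by_contra hlt
      push_neg at hlt
      obtain ⟨k, hk⟩ := hcex x hlt
      exact absurd (hx k) (not_lt.2 hk)
    · intro hx k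
      exact lt_of_lt_of_le (hclt k) hx
  have h1 : Filter.Tendsto (fun k => ν (Icc 0 (cseq k))) Filter.atTop (nhds (ν (Ico 0 b))) := by
    rw [← hun]
    exact tendsto_measure_iUnion_atTop (fun j k hjk => Icc_subset_Icc_right (hcmono hjk))
  have h2 : Filter.Tendsto (fun k => μ (Ioi (cseq k))) Filter.atTop (nhds (μ (Ici b))) := by
    rw [← hinter]
    exact tendsto_measure_iInter_atTop (fun k => measurableSet_Ioi.nullMeasurableSet)
      (fun j k hjk => Ioi_subset_Ioi (hcmono hjk)) ⟨0, measure_ne_top μ _⟩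
  have h3 : Filter.Tendsto (fun k => (μ (Ioi (cseq k)))⁻¹) Filter.atTop
      (nhds ((μ (Ici b))⁻¹)) := h2.inv
  have h4 : ∀ k, (μ (Ici 0))⁻¹ + ν (Icc 0 (cseq k)) = (μ (Ioi (cseq k)))⁻¹ := by
    intro k
    rw [← hint _ measurableSet_Icc]
    exact core_eq μ hnonneg (cseq k) (hc0 k)
      (fun h0 => hGb (measure_mono_null (fun x hx => lt_of_lt_of_le (hclt k) hx) h0))
  have h5 : Filter.Tendsto (fun k => (μ (Ici 0))⁻¹ + ν (Icc 0 (cseq k))) Filter.atTop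
      (nhds ((μ (Ici 0))⁻¹ + ν (Ico 0 b))) := Filter.Tendsto.const_add _ h1
  have h6 : Filter.Tendsto (fun k => (μ (Ici 0))⁻¹ + ν (Icc 0 (cseq k))) Filter.atTop
      (nhds ((μ (Ici b))⁻¹)) := by
    simp only [h4]
    exact h3
  rw [hint _ measurableSet_Ico]
  exact tendsto_nhds_unique h5 h6

/-- Pathwise identity `W* - 1 = -∫_{[0, T∧t)} G(s)⁻¹ M(ds)` where
`M(ds) = d1{C ≤ s} - 1{C ≥ s} dΛ(s)`, `Λ` the cumulative hazard measure
`dΛ(u) = G(u-)⁻¹ dF0(u)`, `W* = 1{C ≥ T∧t}/G((T∧t)-)`, valid whenever `G((T∧t)-) > 0`.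
The jump part of the integral equals `G(c)⁻¹` if `c = C(ω) ∈ [0, T∧t)`. -/
theorem ipcw_weight_martingale_representation
    (μ : Measure ℝ) [IsProbabilityMeasure μ] (hnonneg : μ (Set.Iio 0) = 0)
    (t : ℝ) (ht : 0 < t) (c T : ℝ) (hc : 0 ≤ c) (hT : 0 < T)
    (hpos : 0 < μ (Set.Ici (min T t))) :
    (if min T t ≤ c then (1 : ℝ) else 0) / (μ (Set.Ici (min T t))).toReal - 1 =
      -((if c < min T t then ((μ (Set.Ioi c)).toReal)⁻¹ else 0) -
        ∫ s in Set.Ico 0 (min T t),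
          (if s ≤ c then ((μ (Set.Ioi s)).toReal)⁻¹ else 0)
            ∂(μ.withDensity fun u => (μ (Set.Ici u))⁻¹)) := by
  have hm0 : 0 < min T t := lt_min hT ht
  set m := min T t with hmdef
  have hpos' : μ (Ici m) ≠ 0 := hpos.ne'
  have hIci0 : μ (Ici 0) = 1 := by
    have hd : Disjoint (Iio (0:ℝ)) (Ici 0) :=
      disjoint_left.2 fun x hx hx' => absurd (mem_Ici.1 hx') (not_le.2 (mem_Iio.1 hx))
    have hu : μ (Iio 0) + μ (Ici 0) = μ univ := by
      rw [← measure_union hd measurableSet_Ici, Iio_union_Ici]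
    rw [hnonneg, zero_add, measure_univ] at hu
    exact hu
  have hmeasIoi : Measurable fun s : ℝ => μ (Ioi s) :=
    Antitone.measurable (fun x y hxy => measure_mono (Ioi_subset_Ioi hxy))
  have hmeasIci : Measurable fun s : ℝ => μ (Ici s) :=
    Antitone.measurable (fun x y hxy => measure_mono (Ici_subset_Ici.2 hxy))
  have hw : Measurable fun u : ℝ => (μ (Ici u))⁻¹ := hmeasIci.inv
  have hfsm : Measurable fun s : ℝ => (if s ≤ c then ((μ (Ioi s)).toReal)⁻¹ else 0) :=
    Measurable.ite measurableSet_Iic (hmeasIoi.ennreal_toReal.inv) measurable_const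
  have hfmeas : Measurable fun s : ℝ =>
      ENNReal.ofReal (if s ≤ c then ((μ (Ioi s)).toReal)⁻¹ else 0) :=
    ENNReal.measurable_ofReal.comp hfsm
  set V := ∫⁻ s in Ico 0 m, (if s ≤ c then (μ (Ioi s) * μ (Ici s))⁻¹ else (0:ℝ≥0∞)) ∂μ
    with hVdef
  have hIeq : (∫ s in Ico 0 m, (if s ≤ c then ((μ (Ioi s)).toReal)⁻¹ else 0)
      ∂(μ.withDensity fun u => (μ (Ici u))⁻¹)) = V.toReal := by
    rw [restrict_withDensity measurableSet_Ico]
    have hnn : 0 ≤ᵐ[(μ.restrict (Ico 0 m)).withDensity fun u => (μ (Ici u))⁻¹]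
        (fun s => if s ≤ c then ((μ (Ioi s)).toReal)⁻¹ else 0) := by
      apply Filter.Eventually.of_forall
      intro s
      dsimp only [Pi.zero_apply]
      split
      · positivity
      · exact le_refl 0
    rw [integral_eq_lintegral_of_nonneg_ae hnn hfsm.aestronglyMeasurable]
    congr 1
    rw [lintegral_withDensity_eq_lintegral_mul _ hw hfmeas]
    apply setLIntegral_congr_fun measurableSet_Ico
    intro s hs
    have hIois : μ (Ioi s) ≠ 0 := fun h0 =>
      hpos' (measure_mono_null (fun x hx => lt_of_lt_of_le hs.2 hx) h0)
    simp only [Pi.mul_apply]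
    split
    · rw [← ENNReal.toReal_inv, ENNReal.ofReal_toReal (ENNReal.inv_ne_top.2 hIois),
        ENNReal.mul_inv (Or.inl hIois) (Or.inl (measure_ne_top μ _)), mul_comm]
    · simp
  have hindi : V = ∫⁻ s in Iic c ∩ Ico 0 m, (μ (Ioi s) * μ (Ici s))⁻¹ ∂μ := by
    rw [hVdef]
    have hind : ∀ s : ℝ, (if s ≤ c then (μ (Ioi s) * μ (Ici s))⁻¹ else (0:ℝ≥0∞))
        = (Iic c).indicator (fun s => (μ (Ioi s) * μ (Ici s))⁻¹) s := by
      intro s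
      simp [indicator_apply, mem_Iic]
    simp_rw [hind]
    rw [lintegral_indicator measurableSet_Iic, Measure.restrict_restrict measurableSet_Iic]
  rcases lt_or_ge c m with hcm | hmc
  · -- case c < m : the weight is 0, the jump term is present
    have hinter : Iic c ∩ Ico 0 m = Icc 0 c := by
      ext s
      simp only [mem_inter_iff, mem_Iic, mem_Ico, mem_Icc]
      constructor
      · rintro ⟨h1, h2, h3⟩
        exact ⟨h2, h1⟩
      · rintro ⟨h1, h2⟩
        exact ⟨h2, h1, lt_of_le_of_lt h2 hcm⟩
    have hGc : μ (Ioi c) ≠ 0 := fun h0 =>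
      hpos' (measure_mono_null (fun x hx => lt_of_lt_of_le hcm hx) h0)
    have hcore := core_eq μ hnonneg c hc hGc
    rw [hIci0, inv_one] at hcore
    have hcore' : 1 + V = (μ (Ioi c))⁻¹ := by
      rw [hindi, hinter]
      exact hcore
    have hVne : V ≠ ⊤ :=
      (ENNReal.add_ne_top.1 (hcore' ▸ ENNReal.inv_ne_top.2 hGc)).2
    have hreal : 1 + V.toReal = ((μ (Ioi c)).toReal)⁻¹ := by
      rw [← ENNReal.toReal_inv, ← hcore', ENNReal.toReal_add (by simp) hVne,
        ENNReal.toReal_one]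
    rw [if_neg (not_le.2 hcm), if_pos hcm, hIeq, zero_div]
    linarith [hreal]
  · -- case m ≤ c : the weight is 1/G(m-), no jump
    have hinter : Iic c ∩ Ico 0 m = Ico 0 m :=
      inter_eq_right.2 fun s hs => le_trans (le_of_lt hs.2) hmc
    have hcore := core_Ico μ hnonneg m hm0 hpos'
    rw [hIci0, inv_one] at hcore
    have hcore' : 1 + V = (μ (Ici m))⁻¹ := by
      rw [hindi, hinter]
      exact hcore
    have hVne : V ≠ ⊤ :=
      (ENNReal.add_ne_top.1 (hcore' ▸ ENNReal.inv_ne_top.2 hpos')).2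
    have hreal : 1 + V.toReal = ((μ (Ici m)).toReal)⁻¹ := by
      rw [← ENNReal.toReal_inv, ← hcore', ENNReal.toReal_add (by simp) hVne,
        ENNReal.toReal_one]
    rw [if_pos hmc, if_neg (not_lt.2 hmc), hIeq, one_div]
    linarith [hreal]
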